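/- Let G be a real special 2-group with associated quadratic map q : V → W, where V = G/Z(G) and W = Z(G). If v ∈ V satisfies v ∉ rad(s∘b_q) for every nonzero linear map s : W → F₂, then the set {(v,w) : w ∈ W} (i.e., the full coset of Z(G) over v) is a single conjugacy class of G. -/

import Mathlib

structure IsSpecial2Group (G : Type*) [Group G] [Finite G] : Prop where
  card_pow : ∃ n : ℕ, Nat.card G = 2 ^ n
  frattini_eq : frattini G = Subgroup.center G
  commutator_eq : commutator G = Subgroup.center G
  sq_eq_one : ∀ g ∈ Subgroup.center G, g * g = 1

open scoped commutatorElement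

/-- Let `G` be a real special 2-group, with associated quadratic map
`q : V = G/Z(G) → W = Z(G)` whose polar map is the commutator map, the linear
maps `s : W → F₂` being the homomorphisms `Z(G) →* Multiplicative (ZMod 2)`.
If `x ∈ G` represents a coset `v ∈ V` lying outside `rad(s∘b_q)` for every
nonzero `s` (i.e. for every `s ≠ 1` there is `y` with `s(⁅x,y⁆) ≠ 1`), then the
full coset `xZ(G) = {(v,w) : w ∈ W}` is a single conjugacy class of `G`: the
conjugates of `x` are exactly the elements `g` with `x⁻¹g ∈ Z(G)`. -/
theorem conjugacy_class_of_nonradical_element (G : Type*) [Group G] [Finite G]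
    (hG : IsSpecial2Group G)
    (hreal : ∀ x : G, IsConj x x⁻¹)
    (hcomm : ∀ x y : G, ⁅x, y⁆ ∈ Subgroup.center G)
    (x : G)
    (hx : ∀ s : Subgroup.center G →* Multiplicative (ZMod 2), s ≠ 1 →
      ∃ y : G, s ⟨⁅x, y⁆, hcomm x y⟩ ≠ 1) :
    ∀ g : G, IsConj x g ↔ x⁻¹ * g ∈ Subgroup.center G := by
  -- the map y ↦ ⁅x, y⁆ is a homomorphism G →* Z(G)
  have key : ∀ a b : G, ⁅x, a * b⁆ = ⁅x, a⁆ * ⁅x, b⁆ := by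
    intro a b
    have hc : a⁻¹ * ⁅x, b⁆ = ⁅x, b⁆ * a⁻¹ :=
      Subgroup.mem_center_iff.mp (hcomm x b) a⁻¹
    simp only [commutatorElement_def] at hc ⊢
    calc x * (a * b) * x⁻¹ * (a * b)⁻¹
        = x * a * x⁻¹ * ((x * b * x⁻¹ * b⁻¹) * a⁻¹) := by group
      _ = x * a * x⁻¹ * (a⁻¹ * (x * b * x⁻¹ * b⁻¹)) := by rw [← hc]
      _ = x * a * x⁻¹ * a⁻¹ * (x * b * x⁻¹ * b⁻¹) := by group
  let φ : G →* Subgroup.center G :=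
    { toFun := fun y => ⟨⁅x, y⁆, hcomm x y⟩
      map_one' := by ext; simp
      map_mul' := fun a b => by ext; exact key a b }
  -- φ is surjective
  have hsurj : ∀ w : Subgroup.center G, ∃ y : G, φ y = w := by
    by_contra hns
    push_neg at hns
    obtain ⟨w, hw⟩ := hns
    -- pass to the quotient Z(G) / range φ, an elementary abelian 2-group
    letI : CommGroup (Subgroup.center G) := open scoped IsMulCommutative in inferInstance
    set Q := Subgroup.center G ⧸ φ.range with hQ
    set A := Additive Q with hA
    have h2 : ∀ q : A, (2 : ℕ) • q = 0 := by
      intro q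
      induction q using QuotientGroup.induction_on with
      | H z =>
        have : (z : G) * z = 1 := hG.sq_eq_one z z.2
        have hz2 : z * z = 1 := Subtype.ext (by simpa using this)
        change (2 : ℕ) • Additive.ofMul (QuotientGroup.mk z : Q) = 0
        rw [two_nsmul]
        show ((QuotientGroup.mk z : Q) * QuotientGroup.mk z : Q) = 1
        rw [← QuotientGroup.mk_mul, hz2]; rfl
    letI : Module (ZMod 2) A := AddCommGroup.zmodModule h2
    have hwq : (QuotientGroup.mk w : Q) ≠ 1 := by
      intro h
      obtain ⟨y, hy⟩ := (QuotientGroup.eq_one_iff w).mp h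
      exact hw y hy
    -- find a linear functional not vanishing at the class of w
    have : ¬ ∀ f : Module.Dual (ZMod 2) A, f (Additive.ofMul (QuotientGroup.mk w : Q)) = 0 := by
      rw [Module.forall_dual_apply_eq_zero_iff (ZMod 2)]
      exact fun h => hwq h
    obtain ⟨f, hf⟩ := not_forall.mp this
    -- turn it into a multiplicative character of Z(G)
    let s : Subgroup.center G →* Multiplicative (ZMod 2) :=
      (AddMonoidHom.toMultiplicativeRight f.toAddMonoidHom).comp
        (QuotientGroup.mk' φ.range)
    have hs1 : s ≠ 1 := by
      intro h
      apply hf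
      have := DFunLike.congr_fun h w
      simp [s] at this; exact this
    obtain ⟨y, hy⟩ := hx s hs1
    apply hy
    have hmem : (⟨⁅x, y⁆, hcomm x y⟩ : Subgroup.center G) ∈ φ.range := ⟨y, rfl⟩
    have h1 : (QuotientGroup.mk' φ.range) ⟨⁅x, y⁆, hcomm x y⟩ = 1 :=
      (QuotientGroup.eq_one_iff _).mpr hmem
    simp [s, h1]
  intro g
  constructor
  · intro h
    obtain ⟨c, hc⟩ := isConj_iff.mp h
    have he : x⁻¹ * g = ⁅x⁻¹, c⁆ := by
      rw [← hc, commutatorElement_def]; group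
    rw [he]; exact hcomm x⁻¹ c
  · intro hz
    obtain ⟨y, hy⟩ := hsurj ⟨x⁻¹ * g, hz⟩
    have hy' : ⁅x, y⁆ = x⁻¹ * g := congrArg Subtype.val hy
    have hcen : ∀ a : G, a * ⁅x, y⁆ = ⁅x, y⁆ * a :=
      fun a => (Subgroup.mem_center_iff.mp (hcomm x y) a)
    have hsq : ⁅x, y⁆ * ⁅x, y⁆ = 1 := hG.sq_eq_one _ (hcomm x y)
    refine isConj_iff.mpr ⟨y, ?_⟩
    show y * x * y⁻¹ = g
    have hg : g = x * ⁅x, y⁆ := by rw [hy']; group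
    have hinv : ⁅x, y⁆ = ⁅x, y⁆⁻¹ := by
      rw [eq_inv_iff_mul_eq_one]; exact hsq
    calc y * x * y⁻¹ = ⁅x, y⁆⁻¹ * x := by
          simp only [commutatorElement_def]; group
      _ = ⁅x, y⁆ * x := by rw [← hinv]
      _ = x * ⁅x, y⁆ := by rw [hcen x]
      _ = g := hg.symm
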